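/- Suppose X is asymptotically transitive and its norm is Fréchet differentiable at every point of the unit sphere. Then there is a constant C such that ‖I − P‖ = C for every rank-one linear projection P ∈ L(X) with ‖P‖ = 1. -/
import Mathlib

set_option maxHeartbeats 1000000

open ContinuousLinearMap Asymptotics Filter

section aux
variable {X : Type*} [NormedAddCommGroup X] [NormedSpace ℝ X]

/-- Quantitative Šmulyan lemma: near-norming functionals are close to the derivative. -/
lemma smulyan_quant (y : X) (hy : ‖y‖ = 1) (f₀ : X →L[ℝ] ℝ)
    (hd : HasFDerivAt (fun z : X => ‖z‖) f₀ y) {δ : ℝ} (hδ : 0 < δ) :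
    ∃ ε > 0, ∀ h : X →L[ℝ] ℝ, h y = 1 → ‖h‖ ≤ 1 + ε → ‖h - f₀‖ ≤ δ := by
  have hlo := hasFDerivAt_iff_isLittleO_nhds_zero.mp hd
  rw [isLittleO_iff] at hlo
  have hc : (0:ℝ) < δ/4 := by linarith
  have hev := hlo hc
  rw [Metric.eventually_nhds_iff] at hev
  obtain ⟨t₀, ht₀, key⟩ := hev
  set M := ‖f₀‖ with hM
  have hM0 : 0 ≤ M := norm_nonneg _
  set t := t₀/2 with htdef
  have ht : 0 < t := by positivity
  have hden : 0 < 1 + t * M := by positivity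
  refine ⟨min 1 (δ*t/(2*(1+t*M))), by positivity, ?_⟩
  intro h hhy hh
  set ε := min 1 (δ*t/(2*(1+t*M))) with hεdef
  have hε0 : 0 ≤ ε := le_min (by norm_num) (by positivity)
  have hε1 : ε ≤ 1 := min_le_left _ _
  have hε2 : ε ≤ δ*t/(2*(1+t*M)) := min_le_right _ _
  have hε2' : ε * (2*(1+t*M)) ≤ δ*t := by
    rw [← le_div_iff₀ (by positivity)]; exact hε2
  have core : ∀ u : X, ‖u‖ ≤ 1 → (h - f₀) u ≤ δ := by
    intro u hu
    have hdist : dist (t • u) (0:X) < t₀ := by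
      rw [dist_zero_right, norm_smul, Real.norm_eq_abs, abs_of_pos ht]
      nlinarith
    have hk := key hdist
    simp only [hy] at hk
    have hnorm_tu : ‖t • u‖ ≤ t := by
      rw [norm_smul, Real.norm_eq_abs, abs_of_pos ht]; nlinarith
    have hk' : ‖y + t • u‖ - 1 - f₀ (t • u) ≤ δ/4 * t := by
      have h1 := (abs_le.mp (by rwa [Real.norm_eq_abs] at hk)).2
      have : δ/4 * ‖t • u‖ ≤ δ/4 * t := by nlinarith
      linarith
    have hf₀tu : f₀ (t • u) = t * f₀ u := by rw [map_smul]; rfl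
    have hfu : |f₀ u| ≤ M := by
      calc |f₀ u| = ‖f₀ u‖ := rfl
        _ ≤ ‖f₀‖ * ‖u‖ := f₀.le_opNorm u
        _ ≤ M := by nlinarith
    have hfu1 : f₀ u ≤ M := (abs_le.mp hfu).2
    have hfu2 : -M ≤ f₀ u := (abs_le.mp hfu).1
    have hhz : h (y + t • u) = 1 + t * h u := by
      rw [map_add, map_smul, hhy]; rfl
    have hb1 : h (y + t • u) ≤ ‖h‖ * ‖y + t • u‖ :=
      le_trans (le_abs_self _) (h.le_opNorm _)
    have hb2 : ‖y + t • u‖ ≤ 1 + t * f₀ u + δ/4 * t := by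
      rw [hf₀tu] at hk'; linarith
    have hb3 : ‖h‖ * ‖y + t • u‖ ≤ (1+ε) * (1 + t * f₀ u + δ/4 * t) := by
      have hpos : (0:ℝ) ≤ 1 + ε := by linarith
      have hb2' : (0:ℝ) ≤ ‖y + t • u‖ := norm_nonneg _
      exact mul_le_mul hh hb2 hb2' hpos
    have hchain : 1 + t * h u ≤ (1+ε) * (1 + t * f₀ u + δ/4 * t) := by
      rw [← hhz]; exact le_trans hb1 hb3
    have goal' : t * (h u - f₀ u) ≤ δ * t := by
      nlinarith [mul_le_mul_of_nonneg_left hfu1 (mul_nonneg hε0 ht.le),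
        mul_nonneg (mul_nonneg (by linarith : (0:ℝ) ≤ 1 - ε) hδ.le) ht.le, hε2', hchain]
    have hfin : h u - f₀ u ≤ δ := le_of_mul_le_mul_left (by linarith) ht
    rw [ContinuousLinearMap.sub_apply]
    exact hfin
  refine opNorm_le_of_unit_norm hδ.le ?_
  intro u hu
  have h1 := core u (le_of_eq hu)
  have h2 := core (-u) (by rw [norm_neg, hu])
  rw [map_neg] at h2
  rw [Real.norm_eq_abs, abs_le]
  constructor <;> linarith

lemma norming_eq_fderiv (y : X) (hy : ‖y‖ = 1) (f₀ : X →L[ℝ] ℝ)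
    (hd : HasFDerivAt (fun z : X => ‖z‖) f₀ y) (g : X →L[ℝ] ℝ)
    (hgy : g y = 1) (hg : ‖g‖ = 1) : g = f₀ := by
  have key : ∀ δ > (0:ℝ), ‖g - f₀‖ ≤ δ := by
    intro δ hδ
    obtain ⟨ε, hε, H⟩ := smulyan_quant y hy f₀ hd hδ
    exact H g hgy (by linarith [hg.le])
  have : ‖g - f₀‖ ≤ 0 := by
    refine le_of_forall_pos_le_add fun δ hδ => ?_
    simpa using key δ hδ
  rw [← sub_eq_zero]
  exact norm_le_zero_iff.mp this

lemma main_le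
    (hAT : ∀ x y : X, ‖x‖ = 1 → ‖y‖ = 1 → ∀ ε > 0, ∃ T : X ≃L[ℝ] X,
      T x = y ∧ ‖(T : X →L[ℝ] X)‖ ≤ 1 + ε ∧ ‖(T.symm : X →L[ℝ] X)‖ ≤ 1 + ε)
    (hFrechet : ∀ x : X, ‖x‖ = 1 → DifferentiableAt ℝ (fun y : X => ‖y‖) x)
    (f : X →L[ℝ] ℝ) (x : X) (hx : ‖x‖ = 1) (hf : ‖f‖ = 1) (hfx : f x = 1)
    (g : X →L[ℝ] ℝ) (y : X) (hy : ‖y‖ = 1) (hg : ‖g‖ = 1) (hgy : g y = 1) :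
    ‖ContinuousLinearMap.id ℝ X - g.smulRight y‖ ≤
      ‖ContinuousLinearMap.id ℝ X - f.smulRight x‖ := by
  refine le_of_forall_pos_le_add fun δ hδ => ?_
  set f₀ := fderiv ℝ (fun z : X => ‖z‖) y with hf₀def
  have hd : HasFDerivAt (fun z : X => ‖z‖) f₀ y := (hFrechet y hy).hasFDerivAt
  have hgf : g = f₀ := norming_eq_fderiv y hy f₀ hd g hgy hg
  obtain ⟨ε₁, hε₁, HQ⟩ := smulyan_quant y hy f₀ hd (half_pos hδ)
  set ε := min ε₁ (min 1 (δ/12)) with hεdef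
  have hεpos : 0 < ε := lt_min hε₁ (lt_min one_pos (by linarith))
  have hεa : ε ≤ ε₁ := min_le_left _ _
  have hεb : ε ≤ 1 := le_trans (min_le_right _ _) (min_le_left _ _)
  have hεc : ε ≤ δ/12 := le_trans (min_le_right _ _) (min_le_right _ _)
  obtain ⟨T, hTx, hT, hTs⟩ := hAT x y hx hy ε hεpos
  set h := f.comp (T.symm : X →L[ℝ] X) with hhdef
  have hsymm : T.symm y = x := by rw [← hTx]; exact T.symm_apply_apply x
  have hhy : h y = 1 := by
    simp only [hhdef, ContinuousLinearMap.comp_apply, ContinuousLinearEquiv.coe_coe, hsymm, hfx]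
  have hhn : ‖h‖ ≤ 1 + ε := by
    calc ‖h‖ ≤ ‖f‖ * ‖(T.symm : X →L[ℝ] X)‖ := opNorm_comp_le _ _
      _ ≤ 1 + ε := by rw [hf]; linarith
  have hhf₀ : ‖h - f₀‖ ≤ δ/2 := HQ h hhy (by linarith)
  have hid : (T : X →L[ℝ] X).comp
      ((ContinuousLinearMap.id ℝ X - f.smulRight x).comp (T.symm : X →L[ℝ] X)) =
      ContinuousLinearMap.id ℝ X - h.smulRight y := by
    ext z
    simp only [ContinuousLinearMap.comp_apply, ContinuousLinearMap.sub_apply,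
      ContinuousLinearMap.id_apply, ContinuousLinearMap.smulRight_apply,
      ContinuousLinearEquiv.coe_coe, map_sub, map_smul, T.apply_symm_apply, hTx, hhdef]
  have hP1 : ‖f.smulRight x‖ = 1 := by
    rw [norm_smulRight_apply, hf, hx, one_mul]
  have hP2 : ‖ContinuousLinearMap.id ℝ X - f.smulRight x‖ ≤ 2 := by
    calc ‖ContinuousLinearMap.id ℝ X - f.smulRight x‖
        ≤ ‖ContinuousLinearMap.id ℝ X‖ + ‖f.smulRight x‖ := norm_sub_le _ _
      _ ≤ 1 + 1 := add_le_add norm_id_le (le_of_eq hP1)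
      _ = 2 := by norm_num
  have hIh : ‖ContinuousLinearMap.id ℝ X - h.smulRight y‖ ≤
      (1+ε) * (‖ContinuousLinearMap.id ℝ X - f.smulRight x‖ * (1+ε)) := by
    rw [← hid]
    calc ‖(T : X →L[ℝ] X).comp ((ContinuousLinearMap.id ℝ X - f.smulRight x).comp
          (T.symm : X →L[ℝ] X))‖
        ≤ ‖(T : X →L[ℝ] X)‖ * ‖(ContinuousLinearMap.id ℝ X - f.smulRight x).comp
          (T.symm : X →L[ℝ] X)‖ := opNorm_comp_le _ _
      _ ≤ (1+ε) * (‖ContinuousLinearMap.id ℝ X - f.smulRight x‖ * (1+ε)) := by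
          refine mul_le_mul hT ?_ (norm_nonneg _) (by linarith)
          calc ‖(ContinuousLinearMap.id ℝ X - f.smulRight x).comp (T.symm : X →L[ℝ] X)‖
              ≤ ‖ContinuousLinearMap.id ℝ X - f.smulRight x‖ * ‖(T.symm : X →L[ℝ] X)‖ :=
                opNorm_comp_le _ _
            _ ≤ ‖ContinuousLinearMap.id ℝ X - f.smulRight x‖ * (1+ε) :=
                mul_le_mul_of_nonneg_left hTs (norm_nonneg _)
  have hsplit : ContinuousLinearMap.id ℝ X - g.smulRight y =
      (ContinuousLinearMap.id ℝ X - h.smulRight y) + (h - g).smulRight y := by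
    ext z
    simp only [ContinuousLinearMap.sub_apply, ContinuousLinearMap.add_apply,
      ContinuousLinearMap.id_apply, ContinuousLinearMap.smulRight_apply, sub_smul]
    abel
  have hdiff : ‖(h - g).smulRight y‖ ≤ δ/2 := by
    rw [norm_smulRight_apply, hy, mul_one, hgf]
    exact hhf₀
  calc ‖ContinuousLinearMap.id ℝ X - g.smulRight y‖
      ≤ ‖ContinuousLinearMap.id ℝ X - h.smulRight y‖ + ‖(h - g).smulRight y‖ := by
        rw [hsplit]; exact norm_add_le _ _
    _ ≤ (1+ε) * (‖ContinuousLinearMap.id ℝ X - f.smulRight x‖ * (1+ε)) + δ/2 :=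
        add_le_add hIh hdiff
    _ ≤ ‖ContinuousLinearMap.id ℝ X - f.smulRight x‖ + δ := by
        nlinarith [mul_le_mul_of_nonneg_left hP2 hεpos.le,
          mul_nonneg (mul_nonneg hεpos.le (by linarith : (0:ℝ) ≤ 1 - ε))
            (norm_nonneg (ContinuousLinearMap.id ℝ X - f.smulRight x)),
          norm_nonneg (ContinuousLinearMap.id ℝ X - f.smulRight x), hεc, hεb]

end aux

theorem stmt_10 {X : Type*} [NormedAddCommGroup X] [NormedSpace ℝ X] [CompleteSpace X]
    (hAT : ∀ x y : X, ‖x‖ = 1 → ‖y‖ = 1 → ∀ ε > 0, ∃ T : X ≃L[ℝ] X,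
      T x = y ∧ ‖(T : X →L[ℝ] X)‖ ≤ 1 + ε ∧ ‖(T.symm : X →L[ℝ] X)‖ ≤ 1 + ε)
    (hFrechet : ∀ x : X, ‖x‖ = 1 → DifferentiableAt ℝ (fun y : X => ‖y‖) x) :
    ∃ C : ℝ, ∀ (f : X →L[ℝ] ℝ) (x : X), ‖x‖ = 1 → ‖f‖ = 1 → f x = 1 →
      ‖ContinuousLinearMap.id ℝ X - f.smulRight x‖ = C := by
  by_cases hex : ∃ f : X →L[ℝ] ℝ, ∃ x : X, ‖x‖ = 1 ∧ ‖f‖ = 1 ∧ f x = 1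
  · obtain ⟨f₀, x₀, hx₀, hf₀, hfx₀⟩ := hex
    refine ⟨‖ContinuousLinearMap.id ℝ X - f₀.smulRight x₀‖, ?_⟩
    intro f x hx hf hfx
    exact le_antisymm
      (main_le hAT hFrechet f₀ x₀ hx₀ hf₀ hfx₀ f x hx hf hfx)
      (main_le hAT hFrechet f x hx hf hfx f₀ x₀ hx₀ hf₀ hfx₀)
  · exact ⟨0, fun f x hx hf hfx => absurd ⟨f, x, hx, hf, hfx⟩ hex⟩
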